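/- For every t₀ ∈ C with |t₀| < q, one has s_C(t₀) = Σ_{i≥0} π̃^{q^i}/(d_i·(θ^{q^i} − t₀)), both series converging. Moreover the series Σ_{i≥0} π̃^{q^i}/(d_i·(θ^{q^i} − t₀)) converges for every t₀ ∈ C with t₀ ∉ {θ^{q^i} : i ≥ 0}, and (t − θ)·Σ_{i≥0} π̃^{q^i}/(d_i·(θ^{q^i} − t)) tends to −π̃ as t tends to θ (along such t₀); i.e. the meromorphic extension of s_C satisfies ((t − θ)·s_C(t))|_{t=θ} = −π̃. -/

import Mathlib

/-- The Carlitz factorials: `d_0 = 1`, `d_i = [i] d_{i-1}^q` with `[i] = θ^{q^i} - θ`. -/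
noncomputable def carlitzD {C : Type*} [Field C] (q : ℕ) (θ : C) : ℕ → C
  | 0 => 1
  | i + 1 => (θ ^ q ^ (i + 1) - θ) * carlitzD q θ i ^ q

open Filter Topology IsUltrametricDist

section Aux

variable {C : Type*} [NormedField C] [IsUltrametricDist C]

private lemma carlitz_usub {a b : C} (h : ‖b‖ < ‖a‖) : ‖a - b‖ = ‖a‖ := by
  rw [sub_eq_add_neg, norm_add_eq_max_of_norm_ne_norm (by rw [norm_neg]; exact h.ne'),
    norm_neg, max_eq_left h.le]

variable {q : ℕ} {θ : C}

private lemma carlitz_one_lt_q (hq : 2 ≤ q) : (1 : ℝ) < q := by exact_mod_cast hq.trans_lt' one_lt_two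

private lemma carlitzD_norm (hq : 2 ≤ q) (hθ : ‖θ‖ = (q : ℝ)) (i : ℕ) :
    ‖carlitzD q θ i‖ = (q : ℝ) ^ (i * q ^ i) := by
  induction i with
  | zero => simp [carlitzD]
  | succ i ih =>
    have h1 : (1 : ℝ) < q := carlitz_one_lt_q hq
    have hm : 1 < q ^ (i + 1) := Nat.one_lt_pow (Nat.succ_ne_zero i) (by omega)
    have hlt : ‖θ‖ < ‖θ ^ q ^ (i + 1)‖ := by
      rw [norm_pow, hθ]
      calc (q : ℝ) = (q : ℝ) ^ 1 := (pow_one _).symm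
        _ < (q : ℝ) ^ q ^ (i + 1) := pow_lt_pow_right₀ h1 hm
    simp only [carlitzD]
    rw [norm_mul, norm_pow, carlitz_usub hlt, norm_pow, hθ, ih, ← pow_mul, ← pow_add]
    congr 1
    ring

private lemma carlitzD_ne (hq : 2 ≤ q) (hθ : ‖θ‖ = (q : ℝ)) (i : ℕ) : carlitzD q θ i ≠ 0 := by
  intro h
  have h2 := carlitzD_norm hq hθ i
  rw [h, norm_zero] at h2
  have h1 : (1 : ℝ) < q := carlitz_one_lt_q hq
  have : (0 : ℝ) < (q : ℝ) ^ (i * q ^ i) := by positivity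
  linarith [h2 ▸ this]

private lemma carlitz_norm_term (hq : 2 ≤ q) (hθ : ‖θ‖ = (q : ℝ)) (ϖ t : C) (i : ℕ)
    (ht : ‖t‖ < (q : ℝ) ^ q ^ i) :
    ‖ϖ ^ q ^ i / (carlitzD q θ i * (θ ^ q ^ i - t))‖ = (‖ϖ‖ / (q : ℝ) ^ (i + 1)) ^ q ^ i := by
  have hsub : ‖θ ^ q ^ i - t‖ = (q : ℝ) ^ q ^ i := by
    rw [carlitz_usub (by rw [norm_pow, hθ]; exact ht), norm_pow, hθ]
  rw [norm_div, norm_mul, norm_pow, carlitzD_norm hq hθ i, hsub, ← pow_add, div_pow, ← pow_mul]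
  have : i * q ^ i + q ^ i = (i + 1) * q ^ i := by ring
  rw [this]

private lemma carlitz_eventually_le_half (hq : 2 ≤ q) {r : ℝ} (hr : 0 ≤ r) :
    ∀ᶠ i : ℕ in atTop, (r / (q : ℝ) ^ (i + 1)) ^ q ^ i ≤ (1 / 2 : ℝ) ^ i := by
  have h1 : (1 : ℝ) < q := carlitz_one_lt_q hq
  filter_upwards [(tendsto_pow_atTop_atTop_of_one_lt h1).eventually_ge_atTop (2 * r)] with i hi
  have hq0 : (0 : ℝ) < (q : ℝ) ^ (i + 1) := by positivity
  have h3 : (q : ℝ) ^ i ≤ (q : ℝ) ^ (i + 1) := pow_le_pow_right₀ h1.le (Nat.le_succ i)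
  have h2 : r / (q : ℝ) ^ (i + 1) ≤ 1 / 2 := by
    rw [div_le_iff₀ hq0]
    linarith
  calc (r / (q : ℝ) ^ (i + 1)) ^ q ^ i ≤ (1 / 2 : ℝ) ^ q ^ i :=
        pow_le_pow_left₀ (div_nonneg hr hq0.le) h2 _
    _ ≤ (1 / 2 : ℝ) ^ i :=
        pow_le_pow_of_le_one (by norm_num) (by norm_num) (Nat.lt_pow_self (n := i) (a := q) (by omega)).le

private lemma carlitz_c_tendsto (hq : 2 ≤ q) {r : ℝ} (hr : 0 ≤ r) :
    Tendsto (fun i : ℕ => (r / (q : ℝ) ^ (i + 1)) ^ q ^ i) atTop (𝓝 0) := by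
  refine squeeze_zero_norm' (a := fun i : ℕ => (1 / 2 : ℝ) ^ i)
    ((carlitz_eventually_le_half hq hr).mono fun i hi => ?_)
    (tendsto_pow_atTop_nhds_zero_of_lt_one (by norm_num) (by norm_num))
  rwa [Real.norm_of_nonneg (by positivity)]

private lemma carlitz_summable_c (hq : 2 ≤ q) {r : ℝ} (hr : 0 ≤ r) :
    Summable (fun i : ℕ => (r / (q : ℝ) ^ (i + 1)) ^ q ^ i) := by
  obtain ⟨N, hN⟩ := eventually_atTop.mp (carlitz_eventually_le_half hq hr)
  rw [← summable_nat_add_iff N]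
  refine Summable.of_nonneg_of_le (fun i => by positivity) (fun i => ?_)
    (summable_geometric_of_lt_one (by norm_num) (by norm_num : (1 / 2 : ℝ) < 1))
  calc (r / (q : ℝ) ^ (i + N + 1)) ^ q ^ (i + N) ≤ (1 / 2 : ℝ) ^ (i + N) :=
        hN _ (Nat.le_add_left N i)
    _ ≤ (1 / 2 : ℝ) ^ i :=
        pow_le_pow_of_le_one (by norm_num) (by norm_num) (Nat.le_add_right i N)

private lemma carlitz_eventually_norm_lt (hq : 2 ≤ q) (M : ℝ) :
    ∀ᶠ i : ℕ in atTop, M < (q : ℝ) ^ q ^ i := by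
  have h1 : (1 : ℝ) < q := carlitz_one_lt_q hq
  filter_upwards [(tendsto_pow_atTop_atTop_of_one_lt h1).eventually_gt_atTop M] with i hi
  exact hi.trans_le (pow_le_pow_right₀ h1.le (Nat.lt_pow_self (n := i) (a := q) (by omega)).le)

private lemma carlitz_tendsto_terms (hq : 2 ≤ q) (hθ : ‖θ‖ = (q : ℝ)) (ϖ t₀ : C) :
    Tendsto (fun i : ℕ => ϖ ^ q ^ i / (carlitzD q θ i * (θ ^ q ^ i - t₀))) atTop (𝓝 0) := by
  refine squeeze_zero_norm' ?_ (carlitz_c_tendsto hq (norm_nonneg ϖ))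
  filter_upwards [carlitz_eventually_norm_lt hq ‖t₀‖] with i hi
  rw [carlitz_norm_term hq hθ ϖ t₀ i hi]

private lemma carlitz_summable_terms [CompleteSpace C] (hq : 2 ≤ q) (hθ : ‖θ‖ = (q : ℝ))
    (ϖ t₀ : C) :
    Summable (fun i : ℕ => ϖ ^ q ^ i / (carlitzD q θ i * (θ ^ q ^ i - t₀))) := by
  apply NonarchimedeanAddGroup.summable_of_tendsto_cofinite_zero
  rw [Nat.cofinite_eq_atTop]
  exact carlitz_tendsto_terms hq hθ ϖ t₀

private lemma carlitz_eC_le (hq : 2 ≤ q) (hθ : ‖θ‖ = (q : ℝ)) (eC : C → C)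
    (heC : ∀ z : C, eC z = ∑' i : ℕ, z ^ q ^ i / carlitzD q θ i) {z : C} (hz : ‖z‖ ≤ 1) :
    ‖eC z‖ ≤ ‖z‖ := by
  rw [heC z]
  refine norm_tsum_le_of_forall_le_of_nonneg (norm_nonneg z) fun j => ?_
  rw [norm_div, norm_pow, carlitzD_norm hq hθ j]
  have h1 : (1 : ℝ) ≤ (q : ℝ) ^ (j * q ^ j) := one_le_pow₀ (carlitz_one_lt_q hq).le
  calc ‖z‖ ^ q ^ j / (q : ℝ) ^ (j * q ^ j) ≤ ‖z‖ ^ q ^ j := div_le_self (by positivity) h1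
    _ ≤ ‖z‖ := pow_le_of_le_one (norm_nonneg z) hz (by positivity)

end Aux

set_option maxHeartbeats 1000000 in
/-- For `|t₀| < q` one has `s_C(t₀) = ∑_i π̃^{q^i}/(d_i (θ^{q^i} - t₀))`, both series
converging; the right-hand series converges for every `t₀ ∉ {θ^{q^i}}`, and
`(t - θ)·∑_i π̃^{q^i}/(d_i (θ^{q^i} - t)) → -π̃` as `t → θ` along such points. -/
theorem carlitz_sC_partial_fractions_and_residue
    {C : Type*} [NormedField C] [CompleteSpace C] [IsAlgClosed C] [IsUltrametricDist C]
    (p e : ℕ) (hp : p.Prime) (he : 0 < e) [CharP C p]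
    (q : ℕ) (hq : q = p ^ e)
    (θ : C) (hθ : ‖θ‖ = (q : ℝ))
    (eC : C → C) (heC : ∀ z : C, eC z = ∑' i : ℕ, z ^ q ^ i / carlitzD q θ i)
    (ϖ : C) (hϖ : ϖ ≠ 0) (hϖ0 : eC ϖ = 0) :
    (∀ t₀ : C, ‖t₀‖ < (q : ℝ) →
        Summable (fun i : ℕ => eC (ϖ / θ ^ (i + 1)) * t₀ ^ i) ∧
        Summable (fun i : ℕ => ϖ ^ q ^ i / (carlitzD q θ i * (θ ^ q ^ i - t₀))) ∧
        ∑' i : ℕ, eC (ϖ / θ ^ (i + 1)) * t₀ ^ i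
          = ∑' i : ℕ, ϖ ^ q ^ i / (carlitzD q θ i * (θ ^ q ^ i - t₀))) ∧
    (∀ t₀ : C, (∀ i : ℕ, t₀ ≠ θ ^ q ^ i) →
        Summable fun i : ℕ => ϖ ^ q ^ i / (carlitzD q θ i * (θ ^ q ^ i - t₀))) ∧
    Filter.Tendsto
      (fun t : C => (t - θ) * ∑' i : ℕ, ϖ ^ q ^ i / (carlitzD q θ i * (θ ^ q ^ i - t)))
      (nhdsWithin θ {t : C | ∀ i : ℕ, t ≠ θ ^ q ^ i})
      (nhds (-ϖ)) := by
  have hq2 : 2 ≤ q := by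
    have h2 := hp.two_le
    have h3 : p ≤ p ^ e := Nat.le_self_pow (by omega) p
    omega
  have h1 : (1 : ℝ) < q := carlitz_one_lt_q hq2
  have h0 : (0 : ℝ) < q := lt_trans one_pos h1
  have hθ0 : θ ≠ 0 := by
    intro h
    rw [h, norm_zero] at hθ
    linarith
  refine ⟨fun t₀ ht => ?_, fun t₀ _ => carlitz_summable_terms hq2 hθ ϖ t₀, ?_⟩
  · -- Part 1
    have hsb : Summable (fun i : ℕ => eC (ϖ / θ ^ (i + 1)) * t₀ ^ i) := by
      apply NonarchimedeanAddGroup.summable_of_tendsto_cofinite_zero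
      rw [Nat.cofinite_eq_atTop]
      have hg : Tendsto (fun i : ℕ => (‖ϖ‖ / (q : ℝ)) * (‖t₀‖ / q) ^ i) atTop (𝓝 0) := by
        simpa using (tendsto_pow_atTop_nhds_zero_of_lt_one
          (div_nonneg (norm_nonneg t₀) h0.le) ((div_lt_one h0).mpr ht)).const_mul
          (‖ϖ‖ / (q : ℝ))
      refine squeeze_zero_norm' ?_ hg
      filter_upwards [(tendsto_pow_atTop_atTop_of_one_lt h1).eventually_ge_atTop ‖ϖ‖] with i hi
      have hqi : (q : ℝ) ^ i ≤ (q : ℝ) ^ (i + 1) := pow_le_pow_right₀ h1.le (Nat.le_succ i)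
      have hz : ‖ϖ / θ ^ (i + 1)‖ = ‖ϖ‖ / (q : ℝ) ^ (i + 1) := by
        rw [norm_div, norm_pow, hθ]
      have hz1 : ‖ϖ / θ ^ (i + 1)‖ ≤ 1 := by
        rw [hz]
        exact div_le_one_of_le₀ (hi.trans hqi) (by positivity)
      calc ‖eC (ϖ / θ ^ (i + 1)) * t₀ ^ i‖ = ‖eC (ϖ / θ ^ (i + 1))‖ * ‖t₀‖ ^ i := by
            rw [norm_mul, norm_pow]
        _ ≤ (‖ϖ‖ / (q : ℝ) ^ (i + 1)) * ‖t₀‖ ^ i := by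
            refine mul_le_mul_of_nonneg_right ?_ (by positivity)
            exact (carlitz_eC_le hq2 hθ eC heC hz1).trans_eq hz
        _ = (‖ϖ‖ / (q : ℝ)) * (‖t₀‖ / q) ^ i := by
            rw [div_pow, pow_succ]
            ring
    refine ⟨hsb, carlitz_summable_terms hq2 hθ ϖ t₀, ?_⟩
    set F : ℕ → ℕ → C :=
      fun i j => ϖ ^ q ^ j / (carlitzD q θ j * θ ^ ((i + 1) * q ^ j)) * t₀ ^ i with hF
    have hstep1 : ∀ i : ℕ, eC (ϖ / θ ^ (i + 1)) * t₀ ^ i = ∑' j : ℕ, F i j := by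
      intro i
      rw [heC (ϖ / θ ^ (i + 1)), ← tsum_mul_right]
      refine tsum_congr fun j => ?_
      simp only [hF]
      rw [div_pow, ← pow_mul, div_div, mul_comm (θ ^ ((i + 1) * q ^ j)) (carlitzD q θ j)]
    have hsummF : Summable (Function.uncurry F) := by
      refine Summable.of_norm_bounded (g := fun x : ℕ × ℕ => (‖t₀‖ / (q : ℝ)) ^ x.1 * (‖ϖ‖ / (q : ℝ) ^ (x.2 + 1)) ^ q ^ x.2)
        (Summable.mul_of_nonneg (f := fun i : ℕ => (‖t₀‖ / (q : ℝ)) ^ i)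
          (g := fun j : ℕ => (‖ϖ‖ / (q : ℝ) ^ (j + 1)) ^ q ^ j)
          (summable_geometric_of_lt_one (by positivity) ((div_lt_one h0).mpr ht))
          (carlitz_summable_c hq2 (norm_nonneg ϖ))
          (Pi.le_def.mpr fun i => by positivity) (Pi.le_def.mpr fun j => by positivity)) ?_
      rintro ⟨i, j⟩
      show ‖Function.uncurry F (i, j)‖
          ≤ (‖t₀‖ / (q : ℝ)) ^ i * (‖ϖ‖ / (q : ℝ) ^ (j + 1)) ^ q ^ j
      have hij : i + (j + 1) * q ^ j ≤ j * q ^ j + (i + 1) * q ^ j := by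
        have h1q : 1 ≤ q ^ j := Nat.one_le_pow j q (by omega)
        have h2 : i * 1 ≤ i * q ^ j := Nat.mul_le_mul_left i h1q
        calc i + (j + 1) * q ^ j = i * 1 + (j * q ^ j + q ^ j) := by ring
          _ ≤ i * q ^ j + (j * q ^ j + q ^ j) := Nat.add_le_add_right h2 _
          _ = j * q ^ j + (i + 1) * q ^ j := by ring
      have e1 : ‖Function.uncurry F (i, j)‖
          = ‖t₀‖ ^ i * ‖ϖ‖ ^ q ^ j / (q : ℝ) ^ (j * q ^ j + (i + 1) * q ^ j) := by
        show ‖ϖ ^ q ^ j / (carlitzD q θ j * θ ^ ((i + 1) * q ^ j)) * t₀ ^ i‖ = _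
        rw [norm_mul, norm_div, norm_mul, norm_pow, norm_pow, norm_pow,
          carlitzD_norm hq2 hθ j, hθ, ← pow_add]
        ring
      have e2 : (‖t₀‖ / (q : ℝ)) ^ i * (‖ϖ‖ / (q : ℝ) ^ (j + 1)) ^ q ^ j
          = ‖t₀‖ ^ i * ‖ϖ‖ ^ q ^ j / (q : ℝ) ^ (i + (j + 1) * q ^ j) := by
        rw [div_pow, div_pow, ← pow_mul, div_mul_div_comm, ← pow_add]
      rw [e1, e2]
      refine div_le_div_of_nonneg_left (by positivity) (by positivity) ?_
      exact pow_le_pow_right₀ h1.le hij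
    have hstep3 : ∀ j : ℕ,
        ∑' i : ℕ, F i j = ϖ ^ q ^ j / (carlitzD q θ j * (θ ^ q ^ j - t₀)) := by
      intro j
      have hΘ : (θ : C) ^ q ^ j ≠ 0 := pow_ne_zero _ hθ0
      have hd := carlitzD_ne hq2 hθ j
      have hlt : ‖t₀ / θ ^ q ^ j‖ < 1 := by
        rw [norm_div, norm_pow, hθ, div_lt_one (by positivity)]
        refine ht.trans_le ?_
        calc (q : ℝ) = (q : ℝ) ^ 1 := (pow_one _).symm
          _ ≤ (q : ℝ) ^ q ^ j := pow_le_pow_right₀ h1.le (Nat.one_le_pow j q (by omega))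
      have hsub : θ ^ q ^ j - t₀ ≠ 0 := by
        intro h
        rw [sub_eq_zero] at h
        rw [← h, div_self hΘ, norm_one] at hlt
        exact lt_irrefl _ hlt
      have hone : (1 : C) - t₀ / θ ^ q ^ j ≠ 0 := by
        intro h
        rw [sub_eq_zero] at h
        rw [← h, norm_one] at hlt
        exact lt_irrefl _ hlt
      calc ∑' i : ℕ, F i j
          = ∑' i : ℕ, (ϖ ^ q ^ j / (carlitzD q θ j * θ ^ q ^ j)) * (t₀ / θ ^ q ^ j) ^ i := by
            refine tsum_congr fun i => ?_
            simp only [hF]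
            rw [show (i + 1) * q ^ j = q ^ j + q ^ j * i by ring, pow_add, pow_mul]
            rw [div_pow, div_mul_eq_mul_div, div_mul_div_comm, mul_assoc]
        _ = (ϖ ^ q ^ j / (carlitzD q θ j * θ ^ q ^ j)) * (1 - t₀ / θ ^ q ^ j)⁻¹ := by
            rw [tsum_mul_left, tsum_geometric_of_norm_lt_one hlt]
        _ = ϖ ^ q ^ j / (carlitzD q θ j * (θ ^ q ^ j - t₀)) := by
            rw [eq_div_iff (mul_ne_zero hd hsub)]
            field_simp
    calc ∑' i : ℕ, eC (ϖ / θ ^ (i + 1)) * t₀ ^ i = ∑' i : ℕ, ∑' j : ℕ, F i j :=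
          tsum_congr hstep1
      _ = ∑' j : ℕ, ∑' i : ℕ, F i j := (Summable.tsum_comm hsummF).symm
      _ = ∑' j : ℕ, ϖ ^ q ^ j / (carlitzD q θ j * (θ ^ q ^ j - t₀)) := tsum_congr hstep3
  · -- Part 3 : residue
    set S : Set C := {t : C | ∀ i : ℕ, t ≠ θ ^ q ^ i} with hS
    obtain ⟨M, hM⟩ := (carlitz_c_tendsto hq2 (norm_nonneg ϖ)).bddAbove_range
    set M' := max M 0 with hM'def
    have hM' : ∀ i : ℕ, (‖ϖ‖ / (q : ℝ) ^ (i + 1)) ^ q ^ i ≤ M' :=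
      fun i => le_trans (hM (Set.mem_range_self i)) (le_max_left _ _)
    have hM'0 : (0 : ℝ) ≤ M' := le_max_right _ _
    have hθq0 : θ ^ q ^ (0 : ℕ) = θ := by norm_num
    have hbound : ∀ t : C, ‖t‖ ≤ (q : ℝ) →
        ‖∑' i : ℕ, ϖ ^ q ^ (i + 1) / (carlitzD q θ (i + 1) * (θ ^ q ^ (i + 1) - t))‖ ≤ M' := by
      intro t htq
      refine norm_tsum_le_of_forall_le_of_nonneg hM'0 fun i => ?_
      have hlt : ‖t‖ < (q : ℝ) ^ q ^ (i + 1) := by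
        refine lt_of_le_of_lt htq ?_
        calc (q : ℝ) = (q : ℝ) ^ 1 := (pow_one _).symm
          _ < (q : ℝ) ^ q ^ (i + 1) :=
            pow_lt_pow_right₀ h1 (Nat.one_lt_pow (Nat.succ_ne_zero i) (by omega))
      rw [carlitz_norm_term hq2 hθ ϖ t (i + 1) hlt]
      exact hM' (i + 1)
    have key : ∀ t : C, t ∈ S → ‖t - θ‖ < 1 →
        (t - θ) * ∑' i : ℕ, ϖ ^ q ^ i / (carlitzD q θ i * (θ ^ q ^ i - t))
          = -ϖ + (t - θ) *
            ∑' i : ℕ, ϖ ^ q ^ (i + 1) / (carlitzD q θ (i + 1) * (θ ^ q ^ (i + 1) - t)) := by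
      intro t htS htd
      have htθ : t ≠ θ := by
        have := htS 0
        rwa [hθq0] at this
      rw [Summable.tsum_eq_zero_add (carlitz_summable_terms hq2 hθ ϖ t), mul_add]
      congr 1
      have hd0 : carlitzD q θ 0 = (1 : C) := by simp [carlitzD]
      rw [hθq0, hd0, one_mul, pow_zero, pow_one]
      field_simp [sub_ne_zero.mpr (Ne.symm htθ)]
      ring
    have hmem : ∀ᶠ t in nhdsWithin θ S, t ∈ S ∧ ‖t - θ‖ < 1 := by
      refine Filter.Eventually.and eventually_mem_nhdsWithin ?_
      refine Filter.Eventually.filter_mono nhdsWithin_le_nhds ?_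
      have hb : ∀ᶠ t in 𝓝 θ, dist t θ < 1 :=
        Filter.eventually_iff_exists_mem.mpr
          ⟨Metric.ball θ 1, Metric.ball_mem_nhds θ one_pos, fun t ht => Metric.mem_ball.mp ht⟩
      exact hb.mono fun t ht => by rwa [dist_eq_norm] at ht
    have htend0 : Tendsto
        (fun t : C => (t - θ) *
          ∑' i : ℕ, ϖ ^ q ^ (i + 1) / (carlitzD q θ (i + 1) * (θ ^ q ^ (i + 1) - t)))
        (nhdsWithin θ S) (𝓝 0) := by
      refine squeeze_zero_norm' (a := fun t => ‖t - θ‖ * M') ?_ ?_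
      · filter_upwards [hmem] with t ht
        obtain ⟨hts, htd⟩ := ht
        have htq : ‖t‖ ≤ (q : ℝ) := by
          calc ‖t‖ = ‖θ + (t - θ)‖ := by ring_nf
            _ ≤ max ‖θ‖ ‖t - θ‖ := norm_add_le_max _ _
            _ ≤ (q : ℝ) := max_le (le_of_eq hθ) (htd.le.trans h1.le)
        rw [norm_mul]
        exact mul_le_mul_of_nonneg_left (hbound t htq) (norm_nonneg _)
      · have hc : Tendsto (fun t : C => ‖t - θ‖ * M') (𝓝 θ) (𝓝 (‖θ - θ‖ * M')) :=
          (((continuous_id.sub continuous_const).norm).mul continuous_const).tendsto θ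
        simpa using hc.mono_left nhdsWithin_le_nhds
    have htendG := htend0.const_add (-ϖ)
    rw [add_zero] at htendG
    refine Filter.Tendsto.congr' ?_ htendG
    filter_upwards [hmem] with t ht
    exact (key t ht.1 ht.2).symm
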